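/- Under the assumptions of the existence lemma for J⁺_t (with 0 < t ≤ T = 2π/k, k > 2γ_q, γ_q = 2/(2-q), 1 ≤ q < 2, λ₊ > 0), the non-negative minimizer φ₊(·,t) of J⁺_t over H¹₀(0,t) is unique, and satisfies φ₊(·,t) > 0 on (0,t). -/

import Mathlib

open Set MeasureTheory

/-- Admissible class: `C¹` functions on `[0,t]` vanishing at the endpoints
(a classical realization of `H¹₀(0,t)` for this smooth variational problem). -/
def Adm (t : ℝ) : Set (ℝ → ℝ) :=
  {φ : ℝ → ℝ | ContDiffOn ℝ 1 φ (Icc 0 t) ∧ φ 0 = 0 ∧ φ t = 0}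

/-- The one-phase functional
`J⁺_t(φ) = ∫₀^t ((1/2)(φ')² - (γ_q²/2)φ² - (λ₊/q)|φ|^q)`. -/
noncomputable def Jplus (γq lp q t : ℝ) (φ : ℝ → ℝ) : ℝ :=
  ∫ x in Ioo (0 : ℝ) t,
    ((1 / 2) * (deriv φ x) ^ 2 - (γq ^ 2 / 2) * (φ x) ^ 2 - (lp / q) * |φ x| ^ q)

open intervalIntegral Filter

namespace JP

variable {t : ℝ} {φ ψ η : ℝ → ℝ}

lemma adm_cont (ht : 0 < t) (hφ : φ ∈ Adm t) : ContinuousOn φ (Icc 0 t) :=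
  hφ.1.continuousOn

lemma adm_diffAt (hφ : φ ∈ Adm t) {x : ℝ} (hx : x ∈ Ioo 0 t) :
    DifferentiableAt ℝ φ x :=
  ((hφ.1.differentiableOn one_ne_zero) x (Ioo_subset_Icc_self hx)).differentiableAt
    (Icc_mem_nhds hx.1 hx.2)

lemma adm_derivWithin_eq (hφ : φ ∈ Adm t) {x : ℝ} (hx : x ∈ Ioo 0 t) :
    derivWithin φ (Icc 0 t) x = deriv φ x :=
  derivWithin_of_mem_nhds (Icc_mem_nhds hx.1 hx.2)

lemma adm_derivWithin_cont (ht : 0 < t) (hφ : φ ∈ Adm t) :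
    ContinuousOn (derivWithin φ (Icc 0 t)) (Icc 0 t) :=
  hφ.1.continuousOn_derivWithin (uniqueDiffOn_Icc ht) le_rfl

lemma adm_deriv_contOn_Ioo (ht : 0 < t) (hφ : φ ∈ Adm t) :
    ContinuousOn (deriv φ) (Ioo 0 t) := by
  have := (adm_derivWithin_cont ht hφ).mono Ioo_subset_Icc_self
  refine ContinuousOn.congr this ?_
  intro x hx; exact (adm_derivWithin_eq hφ hx).symm

/-- integrability from an `Icc`-continuous model agreeing on `Ioo`. -/
lemma integrableOn_of_model {F G : ℝ → ℝ} (hG : ContinuousOn G (Icc 0 t))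
    (hFG : EqOn G F (Ioo 0 t)) : IntegrableOn F (Ioo 0 t) :=
  ((hG.integrableOn_Icc).mono_set Ioo_subset_Icc_self).congr_fun hFG measurableSet_Ioo

lemma intOn_mul (ht : 0 < t) (hφ : φ ∈ Adm t) (hψ : ψ ∈ Adm t) :
    IntegrableOn (fun x => φ x * ψ x) (Ioo 0 t) :=
  integrableOn_of_model ((adm_cont ht hφ).mul (adm_cont ht hψ)) (fun _ _ => rfl)

lemma intOn_deriv_mul (ht : 0 < t) (hφ : φ ∈ Adm t) (hψ : ψ ∈ Adm t) :
    IntegrableOn (fun x => deriv φ x * deriv ψ x) (Ioo 0 t) := by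
  refine integrableOn_of_model
    ((adm_derivWithin_cont ht hφ).mul (adm_derivWithin_cont ht hψ)) ?_
  intro x hx
  simp only [Pi.mul_apply, adm_derivWithin_eq hφ hx, adm_derivWithin_eq hψ hx]

lemma contOn_rpow_abs {q : ℝ} (hq : 0 ≤ q) (ht : 0 < t) (hφ : φ ∈ Adm t) :
    ContinuousOn (fun x => |φ x| ^ q) (Icc 0 t) := by
  refine ContinuousOn.rpow_const (continuous_abs.comp_continuousOn (adm_cont ht hφ)) ?_
  intro x _; exact Or.inr hq

lemma intOn_rpow {q : ℝ} (hq : 0 ≤ q) (ht : 0 < t) (hφ : φ ∈ Adm t) :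
    IntegrableOn (fun x => |φ x| ^ q) (Ioo 0 t) :=
  integrableOn_of_model (contOn_rpow_abs hq ht hφ) (fun _ _ => rfl)

lemma intOn_integrand {γ lp q : ℝ} (hq : 0 ≤ q) (ht : 0 < t) (hφ : φ ∈ Adm t) :
    IntegrableOn (fun x =>
      (1 / 2) * (deriv φ x) ^ 2 - (γ ^ 2 / 2) * (φ x) ^ 2 - (lp / q) * |φ x| ^ q)
      (Ioo 0 t) := by
  have h1 := (intOn_deriv_mul ht hφ hφ).const_mul (1/2 : ℝ)
  have h2 := (intOn_mul ht hφ hφ).const_mul (γ ^ 2 / 2)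
  have h3 := (intOn_rpow hq ht hφ).const_mul (lp / q)
  have h4 : IntegrableOn (fun x =>
      (1/2:ℝ) * (deriv φ x * deriv φ x) - γ ^ 2 / 2 * (φ x * φ x) - lp / q * |φ x| ^ q)
      (Ioo 0 t) := (h1.sub h2).sub h3
  refine IntegrableOn.congr_fun h4 ?_ measurableSet_Ioo
  intro x _; ring




noncomputable def g : ℝ → ℝ := fun y => max (6 * y * (1 - y)) 0

lemma g_cont : Continuous g := by
  unfold g; fun_prop

lemma g_nonneg (y : ℝ) : 0 ≤ g y := le_max_right _ _

lemma g_zero_of_nonpos {y : ℝ} (h : y ≤ 0) : g y = 0 :=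
  max_eq_right (by nlinarith)

lemma g_zero_of_one_le {y : ℝ} (h : 1 ≤ y) : g y = 0 :=
  max_eq_right (by nlinarith)

noncomputable def S : ℝ → ℝ := fun y => ∫ u in (0:ℝ)..y, g u

lemma hasDerivAt_S (y : ℝ) : HasDerivAt S (g y) y :=
  integral_hasDerivAt_right (g_cont.intervalIntegrable _ _)
    (g_cont.stronglyMeasurableAtFilter _ _) g_cont.continuousAt

lemma S_nonpos {y : ℝ} (h : y ≤ 0) : S y = 0 := by
  unfold S
  rw [intervalIntegral.integral_of_ge h]
  have : EqOn g (fun _ => (0:ℝ)) (Ioc y 0) := fun u hu => g_zero_of_nonpos hu.2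
  rw [setIntegral_congr_fun measurableSet_Ioc this]
  simp

lemma S_one : S 1 = 1 := by
  unfold S
  have h1 : ∀ u ∈ uIcc (0:ℝ) 1, g u = 6 * u * (1 - u) := by
    intro u hu
    rw [uIcc_of_le zero_le_one] at hu
    exact max_eq_left (by nlinarith [hu.1, hu.2])
  rw [intervalIntegral.integral_congr h1]
  have h2 : ∀ u ∈ uIcc (0:ℝ) 1,
      HasDerivAt (fun u : ℝ => 3 * u ^ 2 - 2 * u ^ 3) (6 * u * (1 - u)) u := by
    intro u _
    have := ((hasDerivAt_pow 2 u).const_mul (3:ℝ)).sub ((hasDerivAt_pow 3 u).const_mul (2:ℝ))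
    exact this.congr_deriv (by simp only [Nat.cast_ofNat, Nat.add_one_sub_one]; ring)
  rw [intervalIntegral.integral_eq_sub_of_hasDerivAt
    (fun u hu => h2 u hu) (Continuous.intervalIntegrable (by fun_prop) _ _)]
  norm_num

lemma S_mono : Monotone S := by
  have hd : ∀ y, 0 ≤ deriv S y := by
    intro y; rw [(hasDerivAt_S y).deriv]; exact g_nonneg y
  exact monotone_of_deriv_nonneg (fun y => (hasDerivAt_S y).differentiableAt) hd

lemma S_one_le {y : ℝ} (h : 1 ≤ y) : S y = 1 := by
  have : S y - S 1 = ∫ u in (1:ℝ)..y, g u := by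
    unfold S
    exact intervalIntegral.integral_interval_sub_left
      (g_cont.intervalIntegrable (μ := volume) 0 y) (g_cont.intervalIntegrable 0 1)
  have h2 : ∫ u in (1:ℝ)..y, g u = 0 := by
    rw [intervalIntegral.integral_of_le h]
    have : EqOn g (fun _ => (0:ℝ)) (Ioc 1 y) := fun u hu => g_zero_of_one_le hu.1.le
    rw [setIntegral_congr_fun measurableSet_Ioc this]
    simp
  rw [h2] at this
  have := sub_eq_zero.mp this
  rw [this, S_one]

lemma S_nonneg (y : ℝ) : 0 ≤ S y := by
  rcases le_or_gt y 0 with h | h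
  · rw [S_nonpos h]
  · rw [← S_nonpos (le_refl 0)]; exact S_mono h.le

lemma S_le_one (y : ℝ) : S y ≤ 1 := by
  rcases le_or_gt 1 y with h | h
  · rw [S_one_le h]
  · rw [← S_one]; exact S_mono h.le

/-- The scaled bump at `α` with width `ε`. -/
lemma hasDerivAt_bump {α ε : ℝ} (hε : 0 < ε) (x : ℝ) :
    HasDerivAt (fun x => S ((x - α) / ε)) (ε⁻¹ * g ((x - α) / ε)) x := by
  have h1 : HasDerivAt (fun x : ℝ => (x - α) / ε) (1 / ε) x := by
    simpa using ((hasDerivAt_id x).sub_const α).div_const ε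
  have := (hasDerivAt_S ((x - α) / ε)).comp x h1
  exact this.congr_deriv (by ring)

lemma bump_integral {t α ε : ℝ} (hε : 0 < ε) (hα : 0 ≤ α) (hαε : α + ε ≤ t) :
    ∫ x in Ioo (0:ℝ) t, ε⁻¹ * g ((x - α) / ε) = 1 := by
  have ht : (0:ℝ) ≤ t := by nlinarith
  have h1 : ∫ x in (0:ℝ)..t, ε⁻¹ * g ((x - α) / ε)
      = S ((t - α) / ε) - S ((0 - α) / ε) := by
    apply intervalIntegral.integral_eq_sub_of_hasDerivAt
    · exact fun x _ => hasDerivAt_bump hε x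
    · exact (Continuous.intervalIntegrable (continuous_const.mul (g_cont.comp (by fun_prop))) _ _)
  rw [intervalIntegral.integral_of_le ht, integral_Ioc_eq_integral_Ioo] at h1
  rw [h1, S_one_le (by rw [le_div_iff₀ hε]; linarith),
    S_nonpos (by apply div_nonpos_of_nonpos_of_nonneg <;> linarith)]
  ring



variable {t : ℝ} {φ ψ η : ℝ → ℝ}


lemma adm_add_smul (hφ : φ ∈ Adm t) (hη : η ∈ Adm t) (s : ℝ) :
    (fun x => φ x + s * η x) ∈ Adm t := by
  refine ⟨hφ.1.add (contDiffOn_const.mul hη.1), ?_, ?_⟩ <;>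
    simp [hφ.2.1, hφ.2.2, hη.2.1, hη.2.2]

lemma deriv_add_smul (hφ : φ ∈ Adm t) (hη : η ∈ Adm t) (s : ℝ) {x : ℝ}
    (hx : x ∈ Ioo 0 t) :
    deriv (fun x => φ x + s * η x) x = deriv φ x + s * deriv η x :=
  ((adm_diffAt hφ hx).hasDerivAt.add
    ((adm_diffAt hη hx).hasDerivAt.const_mul s)).deriv

lemma key_split {γ lp q : ℝ} (hq : 0 ≤ q) (ht : 0 < t)
    (hφ : φ ∈ Adm t) (hη : η ∈ Adm t) (s : ℝ) :
    Jplus γ lp q t (fun x => φ x + s * η x) =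
      Jplus γ lp q t φ
      + s * (∫ x in Ioo (0:ℝ) t, (deriv φ x * deriv η x - γ ^ 2 * (φ x * η x)))
      + s ^ 2 * (∫ x in Ioo (0:ℝ) t, ((1/2) * (deriv η x)^2 - (γ^2/2) * (η x)^2))
      - (lp / q) * (∫ x in Ioo (0:ℝ) t, (|φ x + s * η x| ^ q - |φ x| ^ q)) := by
  have hχ := adm_add_smul hφ hη s
  have hP : IntegrableOn (fun x => deriv φ x * deriv η x - γ ^ 2 * (φ x * η x))
      (Ioo 0 t) := (intOn_deriv_mul ht hφ hη).sub ((intOn_mul ht hφ hη).const_mul _)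
  have hQ : IntegrableOn (fun x => (1/2) * (deriv η x)^2 - (γ^2/2) * (η x)^2)
      (Ioo 0 t) := by
    have := ((intOn_deriv_mul ht hη hη).const_mul (1/2:ℝ)).sub
      ((intOn_mul ht hη hη).const_mul (γ^2/2))
    refine IntegrableOn.congr_fun this ?_ measurableSet_Ioo
    intro x _; simp only [Pi.sub_apply]; ring
  have hR : IntegrableOn (fun x => |φ x + s * η x| ^ q - |φ x| ^ q) (Ioo 0 t) :=
    (intOn_rpow hq ht hχ).sub (intOn_rpow hq ht hφ)
  have h0 := intOn_integrand (γ := γ) (lp := lp) hq ht hφ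
  have e1 : EqOn
      (fun x => (1 / 2) * (deriv (fun x => φ x + s * η x) x) ^ 2
        - (γ ^ 2 / 2) * ((fun x => φ x + s * η x) x) ^ 2
        - (lp / q) * |(fun x => φ x + s * η x) x| ^ q)
      (fun x => ((1 / 2) * (deriv φ x) ^ 2 - (γ ^ 2 / 2) * (φ x) ^ 2
          - (lp / q) * |φ x| ^ q)
        + s * (deriv φ x * deriv η x - γ ^ 2 * (φ x * η x))
        + s ^ 2 * ((1/2) * (deriv η x)^2 - (γ^2/2) * (η x)^2)
        - (lp / q) * (|φ x + s * η x| ^ q - |φ x| ^ q)) (Ioo 0 t) := by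
    intro x hx
    simp only [deriv_add_smul hφ hη s hx]
    ring
  calc Jplus γ lp q t (fun x => φ x + s * η x)
      = ∫ x in Ioo (0:ℝ) t,
        (((1 / 2) * (deriv φ x) ^ 2 - (γ ^ 2 / 2) * (φ x) ^ 2
          - (lp / q) * |φ x| ^ q)
        + s * (deriv φ x * deriv η x - γ ^ 2 * (φ x * η x))
        + s ^ 2 * ((1/2) * (deriv η x)^2 - (γ^2/2) * (η x)^2)
        - (lp / q) * (|φ x + s * η x| ^ q - |φ x| ^ q)) := by
        exact setIntegral_congr_fun measurableSet_Ioo e1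
    _ = _ := by
        have hS1 : IntegrableOn (fun x =>
            ((1 / 2) * (deriv φ x) ^ 2 - (γ ^ 2 / 2) * (φ x) ^ 2 - (lp / q) * |φ x| ^ q)
            + s * (deriv φ x * deriv η x - γ ^ 2 * (φ x * η x))) (Ioo 0 t) :=
          h0.add (hP.const_mul s)
        have hS2 : IntegrableOn (fun x =>
            (((1 / 2) * (deriv φ x) ^ 2 - (γ ^ 2 / 2) * (φ x) ^ 2 - (lp / q) * |φ x| ^ q)
            + s * (deriv φ x * deriv η x - γ ^ 2 * (φ x * η x)))
            + s ^ 2 * ((1/2) * (deriv η x)^2 - (γ^2/2) * (η x)^2)) (Ioo 0 t) :=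
          hS1.add (hQ.const_mul _)
        have hD : IntegrableOn (fun x =>
            (lp / q) * (|φ x + s * η x| ^ q - |φ x| ^ q)) (Ioo 0 t) :=
          hR.const_mul _
        rw [integral_sub hS2 hD, integral_add hS1 (hQ.const_mul _),
          integral_add h0 (hP.const_mul s),
          MeasureTheory.integral_const_mul, MeasureTheory.integral_const_mul, MeasureTheory.integral_const_mul]
        rfl

lemma scalar_nonneg {A B : ℝ} (h : ∀ s : ℝ, 0 < s → 0 ≤ s * A + s ^ 2 * B) :
    0 ≤ A := by
  by_contra h'
  push_neg at h'
  have hs : 0 < -A / (|B| + 1) := by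
    apply div_pos (by linarith) (by positivity)
  have := h _ hs
  have hB : 0 ≤ |B| := abs_nonneg B
  have hd : (0:ℝ) < |B| + 1 := by linarith
  have h2 : 0 ≤ A + (-A / (|B| + 1)) * B :=
    (mul_nonneg_iff_of_pos_left hs).mp (by nlinarith)
  have h3 : (-A / (|B| + 1)) * B ≤ (-A / (|B| + 1)) * |B| :=
    mul_le_mul_of_nonneg_left (le_abs_self B) hs.le
  have h4 : 0 ≤ A + (-A / (|B| + 1)) * |B| := by linarith
  have h6 : A + (-A / (|B| + 1)) * |B| = A / (|B| + 1) := by field_simp; ring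
  rw [h6] at h4
  have h7 := (le_div_iff₀ hd).mp h4
  simp at h7
  linarith

/-- Variational inequality: first variation of `Jplus` at a nonneg minimizer in a
nonneg direction is nonnegative. -/
lemma var_ineq {γ lp q : ℝ} (hq : 0 < q) (hlp : 0 < lp) (ht : 0 < t)
    (hφ : φ ∈ Adm t) (hφ0 : ∀ x ∈ Icc (0:ℝ) t, 0 ≤ φ x)
    (hmin : ∀ χ ∈ Adm t, Jplus γ lp q t φ ≤ Jplus γ lp q t χ)
    (hη : η ∈ Adm t) (hη0 : ∀ x ∈ Icc (0:ℝ) t, 0 ≤ η x) :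
    0 ≤ ∫ x in Ioo (0:ℝ) t, (deriv φ x * deriv η x - γ ^ 2 * (φ x * η x)) := by
  apply scalar_nonneg
    (B := ∫ x in Ioo (0:ℝ) t, ((1/2) * (deriv η x)^2 - (γ^2/2) * (η x)^2))
  intro s hs
  have hC : 0 ≤ ∫ x in Ioo (0:ℝ) t, (|φ x + s * η x| ^ q - |φ x| ^ q) := by
    apply setIntegral_nonneg measurableSet_Ioo
    intro x hx
    have hx' := Ioo_subset_Icc_self hx
    have h1 : 0 ≤ φ x := hφ0 x hx'
    have h2 : 0 ≤ η x := hη0 x hx'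
    have h3 : 0 ≤ φ x + s * η x := by positivity
    rw [abs_of_nonneg h1, abs_of_nonneg h3, sub_nonneg]
    exact Real.rpow_le_rpow h1 (by nlinarith) hq.le
  have := hmin _ (adm_add_smul hφ hη s)
  rw [key_split hq.le ht hφ hη s] at this
  have hlq : 0 < lp / q := div_pos hlp hq
  have := mul_nonneg hlq.le hC
  linarith


variable {t : ℝ} {φ ψ η : ℝ → ℝ}

-- previously proven (axioms here for speed)

lemma bump_zero_outside {α ε x : ℝ} (hε : 0 < ε) (h : x ≤ α ∨ α + ε ≤ x) :
    g ((x - α) / ε) = 0 := by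
  rcases h with h | h
  · exact g_zero_of_nonpos (div_nonpos_of_nonpos_of_nonneg (by linarith) hε.le)
  · exact g_zero_of_one_le (by rw [le_div_iff₀ hε]; linarith)

lemma int_bump_le {α ε c : ℝ} {f : ℝ → ℝ} (ht : 0 < t) (hε : 0 < ε) (hα : 0 ≤ α)
    (hαε : α + ε ≤ t)
    (hfi : IntegrableOn (fun x => f x * (ε⁻¹ * g ((x - α) / ε))) (Ioo 0 t))
    (hc : ∀ x ∈ Ioo α (α + ε), f x ≤ c) :
    ∫ x in Ioo (0:ℝ) t, f x * (ε⁻¹ * g ((x - α) / ε)) ≤ c := by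
  have hw_cont : Continuous (fun x => ε⁻¹ * g ((x - α) / ε)) :=
    continuous_const.mul (g_cont.comp (by fun_prop))
  have hwi : IntegrableOn (fun x => ε⁻¹ * g ((x - α) / ε)) (Ioo 0 t) :=
    (hw_cont.continuousOn.integrableOn_Icc (a := 0) (b := t)).mono_set Ioo_subset_Icc_self
  have key : ∫ x in Ioo (0:ℝ) t, f x * (ε⁻¹ * g ((x - α) / ε))
      ≤ ∫ x in Ioo (0:ℝ) t, c * (ε⁻¹ * g ((x - α) / ε)) := by
    apply setIntegral_mono_on hfi (hwi.const_mul c) measurableSet_Ioo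
    intro x _
    by_cases hx : α < x ∧ x < α + ε
    · have hwn : 0 ≤ ε⁻¹ * g ((x - α) / ε) :=
        mul_nonneg (by positivity) (g_nonneg _)
      exact mul_le_mul_of_nonneg_right (hc x hx) hwn
    · push_neg at hx
      have : g ((x - α) / ε) = 0 := by
        rcases le_or_gt x α with h | h
        · exact bump_zero_outside hε (Or.inl h)
        · exact bump_zero_outside hε (Or.inr (hx h))
      rw [this]; ring_nf; rfl
  calc ∫ x in Ioo (0:ℝ) t, f x * (ε⁻¹ * g ((x - α) / ε)) ≤ _ := key
    _ = c := by rw [MeasureTheory.integral_const_mul, bump_integral hε hα hαε, mul_one]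

lemma int_bump_ge {α ε c : ℝ} {f : ℝ → ℝ} (ht : 0 < t) (hε : 0 < ε) (hα : 0 ≤ α)
    (hαε : α + ε ≤ t)
    (hfi : IntegrableOn (fun x => f x * (ε⁻¹ * g ((x - α) / ε))) (Ioo 0 t))
    (hc : ∀ x ∈ Ioo α (α + ε), c ≤ f x) :
    c ≤ ∫ x in Ioo (0:ℝ) t, f x * (ε⁻¹ * g ((x - α) / ε)) := by
  have h1 : ∫ x in Ioo (0:ℝ) t, (-f x) * (ε⁻¹ * g ((x - α) / ε)) ≤ -c := by
    apply int_bump_le ht hε hα hαε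
    · have := hfi.neg
      refine IntegrableOn.congr_fun this ?_ measurableSet_Ioo
      intro x _; simp [neg_mul]
    · intro x hx; linarith [hc x hx]
  have h2 : ∫ x in Ioo (0:ℝ) t, (-f x) * (ε⁻¹ * g ((x - α) / ε))
      = -∫ x in Ioo (0:ℝ) t, f x * (ε⁻¹ * g ((x - α) / ε)) := by
    rw [← MeasureTheory.integral_neg]; congr 1; funext x; ring
  rw [h2] at h1; linarith

/-- B2: the derivative of a nonnegative minimizer is antitone on `(0,t)`. -/
lemma deriv_antitone {γ lp q : ℝ} (hq : 0 < q) (hlp : 0 < lp) (ht : 0 < t)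
    (hφ : φ ∈ Adm t) (hφ0 : ∀ x ∈ Icc (0:ℝ) t, 0 ≤ φ x)
    (hmin : ∀ χ ∈ Adm t, Jplus γ lp q t φ ≤ Jplus γ lp q t χ) :
    AntitoneOn (deriv φ) (Ioo 0 t) := by
  intro x₁ hx₁ x₂ hx₂ hle
  rcases eq_or_lt_of_le hle with rfl | hlt
  · exact le_refl _
  by_contra hcon
  push_neg at hcon
  set d₁ := deriv φ x₁ with hd₁
  set d₂ := deriv φ x₂ with hd₂
  set c₁ := (2 * d₁ + d₂) / 3 with hc₁
  set c₂ := (d₁ + 2 * d₂) / 3 with hc₂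
  have hcc : c₁ < c₂ := by rw [hc₁, hc₂]; linarith
  have hcont₁ : ContinuousAt (deriv φ) x₁ :=
    (adm_deriv_contOn_Ioo ht hφ).continuousAt (Ioo_mem_nhds hx₁.1 hx₁.2)
  have hcont₂ : ContinuousAt (deriv φ) x₂ :=
    (adm_deriv_contOn_Ioo ht hφ).continuousAt (Ioo_mem_nhds hx₂.1 hx₂.2)
  have hev₁ : ∀ᶠ y in nhds x₁, deriv φ y < c₁ :=
    hcont₁.eventually_lt_const (by rw [hc₁]; linarith)
  have hev₂ : ∀ᶠ y in nhds x₂, c₂ < deriv φ y :=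
    hcont₂.eventually_const_lt (by rw [hc₂]; linarith)
  obtain ⟨δ₁, hδ₁, hb₁⟩ := Metric.eventually_nhds_iff.mp hev₁
  obtain ⟨δ₂, hδ₂, hb₂⟩ := Metric.eventually_nhds_iff.mp hev₂
  set ε := min (min δ₁ δ₂) (t - x₂) with hε_def
  have hε : 0 < ε := by
    apply lt_min (lt_min hδ₁ hδ₂); linarith [hx₂.2]
  have hε₁ : ε ≤ δ₁ := le_trans (min_le_left _ _) (min_le_left _ _)
  have hε₂ : ε ≤ δ₂ := le_trans (min_le_left _ _) (min_le_right _ _)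
  have hεt : x₂ + ε ≤ t := by
    have := min_le_right (min δ₁ δ₂) (t - x₂); rw [← hε_def] at this; linarith
  have hεt₁ : x₁ + ε ≤ t := by linarith
  -- the test function
  set η : ℝ → ℝ := fun x => S ((x - x₁) / ε) - S ((x - x₂) / ε) with hη_def
  have hηd : ∀ x, HasDerivAt η
      (ε⁻¹ * g ((x - x₁) / ε) - ε⁻¹ * g ((x - x₂) / ε)) x :=
    fun x => (hasDerivAt_bump hε x).sub (hasDerivAt_bump hε x)
  have hηAdm : η ∈ Adm t := by
    refine ⟨?_, ?_, ?_⟩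
    · have : ContDiff ℝ 1 η := by
        rw [contDiff_one_iff_deriv]
        refine ⟨fun x => (hηd x).differentiableAt, ?_⟩
        have : deriv η = fun x => ε⁻¹ * g ((x - x₁) / ε) - ε⁻¹ * g ((x - x₂) / ε) :=
          funext fun x => (hηd x).deriv
        rw [this]
        exact ((continuous_const.mul (g_cont.comp (by fun_prop))).sub
          (continuous_const.mul (g_cont.comp (by fun_prop))))
      exact this.contDiffOn
    · rw [hη_def]
      simp only
      rw [S_nonpos (div_nonpos_of_nonpos_of_nonneg (by linarith [hx₁.1]) hε.le),
        S_nonpos (div_nonpos_of_nonpos_of_nonneg (by linarith [hx₂.1]) hε.le)]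
      ring
    · rw [hη_def]
      simp only
      rw [S_one_le (by rw [le_div_iff₀ hε]; linarith),
        S_one_le (by rw [le_div_iff₀ hε]; linarith)]
      ring
  have hη0 : ∀ x ∈ Icc (0:ℝ) t, 0 ≤ η x := by
    intro x _
    rw [hη_def]
    simp only [sub_nonneg]
    exact S_mono ((div_le_div_iff_of_pos_right hε).mpr (by linarith))
  -- the contradiction
  have hA := var_ineq hq hlp ht hφ hφ0 hmin hηAdm hη0
  have hderivη : deriv η = fun x => ε⁻¹ * g ((x - x₁) / ε) - ε⁻¹ * g ((x - x₂) / ε) :=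
    funext fun x => (hηd x).deriv
  have hw₁cont : Continuous (fun x => ε⁻¹ * g ((x - x₁) / ε)) :=
    continuous_const.mul (g_cont.comp (by fun_prop))
  have hw₂cont : Continuous (fun x => ε⁻¹ * g ((x - x₂) / ε)) :=
    continuous_const.mul (g_cont.comp (by fun_prop))
  have hfw₁ : IntegrableOn (fun x => deriv φ x * (ε⁻¹ * g ((x - x₁) / ε))) (Ioo 0 t) :=
    integrableOn_of_model ((adm_derivWithin_cont ht hφ).mul hw₁cont.continuousOn)
      (fun x hx => by simp only [Pi.mul_apply]; rw [adm_derivWithin_eq hφ hx])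
  have hfw₂ : IntegrableOn (fun x => deriv φ x * (ε⁻¹ * g ((x - x₂) / ε))) (Ioo 0 t) :=
    integrableOn_of_model ((adm_derivWithin_cont ht hφ).mul hw₂cont.continuousOn)
      (fun x hx => by simp only [Pi.mul_apply]; rw [adm_derivWithin_eq hφ hx])
  have hdd : IntegrableOn (fun x => deriv φ x * deriv η x) (Ioo 0 t) := by
    refine IntegrableOn.congr_fun (hfw₁.sub hfw₂) ?_ measurableSet_Ioo
    intro x _
    simp only [Pi.sub_apply, hderivη]
    ring
  have hφηint : IntegrableOn (fun x => φ x * η x) (Ioo 0 t) :=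
    intOn_mul ht hφ hηAdm
  have hsplit : ∫ x in Ioo (0:ℝ) t, (deriv φ x * deriv η x - γ ^ 2 * (φ x * η x))
      = (∫ x in Ioo (0:ℝ) t, deriv φ x * deriv η x)
        - γ ^ 2 * ∫ x in Ioo (0:ℝ) t, φ x * η x := by
    rw [integral_sub hdd (hφηint.const_mul _), MeasureTheory.integral_const_mul]
  have hφη0 : 0 ≤ ∫ x in Ioo (0:ℝ) t, φ x * η x := by
    apply setIntegral_nonneg measurableSet_Ioo
    intro x hx
    exact mul_nonneg (hφ0 x (Ioo_subset_Icc_self hx)) (hη0 x (Ioo_subset_Icc_self hx))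
  have hsplit2 : ∫ x in Ioo (0:ℝ) t, deriv φ x * deriv η x
      = (∫ x in Ioo (0:ℝ) t, deriv φ x * (ε⁻¹ * g ((x - x₁) / ε)))
        - ∫ x in Ioo (0:ℝ) t, deriv φ x * (ε⁻¹ * g ((x - x₂) / ε)) := by
    rw [← integral_sub hfw₁ hfw₂]
    apply setIntegral_congr_fun measurableSet_Ioo
    intro x _
    simp only [hderivη]
    ring
  have hbound₁ : ∫ x in Ioo (0:ℝ) t, deriv φ x * (ε⁻¹ * g ((x - x₁) / ε)) ≤ c₁ := by
    apply int_bump_le ht hε hx₁.1.le hεt₁ hfw₁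
    intro x hx
    have : dist x x₁ < δ₁ := by
      rw [Real.dist_eq, abs_of_pos (by linarith [hx.1])]
      linarith [hx.2, hε₁]
    exact (hb₁ this).le
  have hbound₂ : c₂ ≤ ∫ x in Ioo (0:ℝ) t, deriv φ x * (ε⁻¹ * g ((x - x₂) / ε)) := by
    apply int_bump_ge ht hε (by linarith [hx₂.1] : (0:ℝ) ≤ x₂) hεt hfw₂
    intro x hx
    have : dist x x₂ < δ₂ := by
      rw [Real.dist_eq, abs_of_pos (by linarith [hx.1])]
      linarith [hx.2, hε₂]
    exact (hb₂ this).le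
  have := mul_nonneg (sq_nonneg γ) hφη0
  rw [hsplit, hsplit2] at hA
  linarith


variable {t : ℝ} {φ ψ η : ℝ → ℝ}


/-- positivity of the integral of a function positive on a subinterval. -/
lemma pos_integral {f : ℝ → ℝ} (ht : 0 < t) (hf : IntegrableOn f (Ioo 0 t))
    (h0 : ∀ x ∈ Ioo (0:ℝ) t, 0 ≤ f x) {α β : ℝ} (hαβ : α < β)
    (hsub : Icc α β ⊆ Ioo 0 t) (hcont : ContinuousOn f (Icc α β))
    (hpos : ∀ x ∈ Icc α β, 0 < f x) :
    0 < ∫ x in Ioo (0:ℝ) t, f x := by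
  obtain ⟨ξ, hξ, hmin⟩ := isCompact_Icc.exists_isMinOn (nonempty_Icc.mpr hαβ.le) hcont
  have hm : 0 < f ξ := hpos ξ hξ
  have h1 : ∫ x in Icc α β, f x ≤ ∫ x in Ioo (0:ℝ) t, f x := by
    apply setIntegral_mono_set hf
    · exact (ae_restrict_iff' measurableSet_Ioo).2 (ae_of_all _ h0)
    · exact HasSubset.Subset.eventuallyLE hsub
  have h2 : f ξ * (volume (Icc α β)).toReal ≤ ∫ x in Icc α β, f x := by
    have := setIntegral_ge_of_const_le measurableSet_Icc
      (by simp [Real.volume_Icc])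
      (fun x hx => hmin hx)
      (hf.mono_set hsub)
    rw [smul_eq_mul, measureReal_def, mul_comm] at this
    exact this
  have h3 : (volume (Icc α β)).toReal = β - α := by
    rw [Real.volume_Icc, ENNReal.toReal_ofReal (by linarith)]
  rw [h3] at h2
  nlinarith


variable {t : ℝ} {φ : ℝ → ℝ}

lemma zero_mem_Adm : (fun _ : ℝ => (0:ℝ)) ∈ Adm t :=
  ⟨contDiffOn_const, rfl, rfl⟩

lemma Jplus_zero {γ lp q : ℝ} (hq : 0 < q) :
    Jplus γ lp q t (fun _ => (0:ℝ)) = 0 := by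
  unfold Jplus
  have : ∀ x ∈ Ioo (0:ℝ) t,
      ((1 / 2) * (deriv (fun _ => (0:ℝ)) x) ^ 2 - (γ ^ 2 / 2) * ((0:ℝ)) ^ 2
        - (lp / q) * |(0:ℝ)| ^ q) = 0 := by
    intro x _
    rw [deriv_const']
    simp [Real.zero_rpow hq.ne']
  rw [setIntegral_congr_fun measurableSet_Ioo this]
  simp

/-- a nonneg minimizer is somewhere positive. -/
lemma exists_pos {γ lp q : ℝ} (hq : 0 < q) (hq2 : q < 2) (hlp : 0 < lp) (ht : 0 < t)
    (hφ : φ ∈ Adm t) (hφ0 : ∀ x ∈ Icc (0:ℝ) t, 0 ≤ φ x)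
    (hmin : ∀ χ ∈ Adm t, Jplus γ lp q t φ ≤ Jplus γ lp q t χ) :
    ∃ x₀ ∈ Ioo (0:ℝ) t, 0 < φ x₀ := by
  by_contra hcon
  push_neg at hcon
  -- then φ ≡ 0 on Icc and J φ = 0
  have hφzero : ∀ x ∈ Icc (0:ℝ) t, φ x = 0 := by
    intro x hx
    rcases eq_or_lt_of_le hx.1 with h | h
    · rw [← h]; exact hφ.2.1
    rcases eq_or_lt_of_le hx.2 with h' | h'
    · rw [h']; exact hφ.2.2
    · exact le_antisymm (hcon x ⟨h, h'⟩) (hφ0 x hx)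
  have hJ0 : Jplus γ lp q t φ = 0 := by
    unfold Jplus
    have : ∀ x ∈ Ioo (0:ℝ) t,
        ((1 / 2) * (deriv φ x) ^ 2 - (γ ^ 2 / 2) * (φ x) ^ 2
          - (lp / q) * |φ x| ^ q) = 0 := by
      intro x hx
      have hev : φ =ᶠ[nhds x] (fun _ => (0:ℝ)) := by
        filter_upwards [Icc_mem_nhds hx.1 hx.2] with y hy
        exact hφzero y hy
      rw [hev.deriv_eq, deriv_const', hφzero x (Ioo_subset_Icc_self hx)]
      simp [Real.zero_rpow hq.ne']
    rw [setIntegral_congr_fun measurableSet_Ioo this]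
    simp
  -- competitor c · x²(t-x)²
  set χ : ℝ → ℝ := fun x => x ^ 2 * (t - x) ^ 2 with hχdef
  have hχAdm : χ ∈ Adm t := by
    refine ⟨(ContDiff.contDiffOn ?_), by simp [hχdef], by simp [hχdef]⟩
    exact (contDiff_id.pow 2).mul ((contDiff_const.sub contDiff_id).pow 2)
  have hχ0 : ∀ x, 0 ≤ χ x := fun x => by positivity
  -- J(c·χ) = c²·B - (lp/q)·c^q·L
  have hB := (∫ x in Ioo (0:ℝ) t, ((1/2) * (deriv χ x)^2 - (γ^2/2) * (χ x)^2))
  set B := ∫ x in Ioo (0:ℝ) t, ((1/2) * (deriv χ x)^2 - (γ^2/2) * (χ x)^2) with hBdef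
  set L := ∫ x in Ioo (0:ℝ) t, |χ x| ^ q with hLdef
  have hL : 0 < L := by
    rw [hLdef]
    apply pos_integral ht (intOn_rpow hq.le ht hχAdm)
      (fun x _ => Real.rpow_nonneg (abs_nonneg _) q)
      (show t/3 < 2*t/3 by linarith)
    · intro x hx
      simp only [mem_Icc] at hx
      constructor <;> [linarith [hx.1]; linarith [hx.2]]
    · exact (contOn_rpow_abs hq.le ht hχAdm).mono (by
        intro x hx
        simp only [mem_Icc] at hx
        constructor <;> [linarith [hx.1]; linarith [hx.2]])
    · intro x hx
      simp only [mem_Icc] at hx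
      have hx1 : 0 < x := by linarith
      have hx2 : x < t := by linarith
      have : 0 < χ x := mul_pos (pow_pos hx1 2) (pow_pos (by linarith : (0:ℝ) < t - x) 2)
      rw [abs_of_pos this]
      exact Real.rpow_pos_of_pos this q
  have hkey : ∀ c : ℝ, 0 < c →
      Jplus γ lp q t (fun x => c * χ x) = c ^ 2 * B - (lp / q) * (c ^ q * L) := by
    intro c hc
    have h1 := key_split (γ := γ) (lp := lp) hq.le ht zero_mem_Adm hχAdm c
    have e0 : (fun x => (0:ℝ) + c * χ x) = fun x => c * χ x := by funext x; ring
    rw [e0, Jplus_zero hq] at h1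
    have eA : ∫ x in Ioo (0:ℝ) t,
        (deriv (fun _ => (0:ℝ)) x * deriv χ x - γ ^ 2 * ((0:ℝ) * χ x)) = 0 := by
      rw [show (fun x => (deriv (fun _ => (0:ℝ)) x * deriv χ x - γ ^ 2 * ((0:ℝ) * χ x)))
          = fun _ => (0:ℝ) by funext x; rw [deriv_const']; ring]
      simp
    have eC : ∫ x in Ioo (0:ℝ) t, (|(0:ℝ) + c * χ x| ^ q - |(0:ℝ)| ^ q)
        = c ^ q * L := by
      rw [hLdef, ← MeasureTheory.integral_const_mul]
      apply setIntegral_congr_fun measurableSet_Ioo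
      intro x _
      show |0 + c * χ x| ^ q - |0| ^ q = c ^ q * |χ x| ^ q
      rw [zero_add, abs_mul, abs_of_pos hc,
        Real.mul_rpow hc.le (abs_nonneg _), abs_zero, Real.zero_rpow hq.ne']
      ring
    rw [eA, eC] at h1
    rw [h1, hBdef]
    ring
  -- choose c small
  set L' := (lp / q) * L with hL'def
  have hL' : 0 < L' := mul_pos (div_pos hlp hq) hL
  set M := max B 0 with hMdef
  have hM0 : 0 ≤ M := le_max_right _ _
  have hBM : B ≤ M := le_max_left _ _
  have h2q : (0:ℝ) < 2 - q := by linarith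
  set r := L' / (2 * (M + 1)) with hrdef
  have hr : 0 < r := by apply div_pos hL'; nlinarith
  set c := min 1 (r ^ (1 / (2 - q))) with hcdef
  have hc : 0 < c := lt_min one_pos (Real.rpow_pos_of_pos hr _)
  have hcr : c ^ (2 - q) ≤ r := by
    have h1 : c ≤ r ^ (1 / (2 - q)) := min_le_right _ _
    have h2 := Real.rpow_le_rpow hc.le h1 h2q.le
    rwa [← Real.rpow_mul hr.le, one_div, inv_mul_cancel₀ h2q.ne', Real.rpow_one] at h2
  have hsplit : c ^ 2 = c ^ q * c ^ (2 - q) := by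
    rw [← Real.rpow_add hc, add_sub_cancel]
    rw [show ((2:ℝ) = ((2:ℕ):ℝ)) by norm_num, Real.rpow_natCast]
  have hJc : Jplus γ lp q t (fun x => c * χ x) < 0 := by
    rw [hkey c hc]
    have hcq : 0 < c ^ q := Real.rpow_pos_of_pos hc q
    have key1 : c ^ (2 - q) * B ≤ r * M := by
      have h1 : c ^ (2 - q) * B ≤ c ^ (2 - q) * M :=
        mul_le_mul_of_nonneg_left hBM (Real.rpow_nonneg hc.le _)
      have h2 : c ^ (2 - q) * M ≤ r * M :=
        mul_le_mul_of_nonneg_right hcr hM0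
      linarith
    have key2 : r * M < L' := by
      rw [hrdef]
      rw [div_mul_eq_mul_div, div_lt_iff₀ (by nlinarith : (0:ℝ) < 2 * (M + 1))]
      nlinarith
    have : c ^ 2 * B - lp / q * (c ^ q * L) = c ^ q * (c ^ (2 - q) * B - L') := by
      rw [hsplit, hL'def]; ring
    rw [this]
    apply mul_neg_of_pos_of_neg hcq
    linarith
  have hcχAdm : (fun x => c * χ x) ∈ Adm t := by
    refine ⟨contDiffOn_const.mul hχAdm.1, ?_, ?_⟩ <;>
      simp [hχdef]
  have := hmin _ hcχAdm
  rw [hJ0] at this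
  linarith

/-- B: strict positivity of nonneg minimizers on the open interval. -/
lemma pos_on_Ioo {γ lp q : ℝ} (hq : 0 < q) (hq2 : q < 2) (hlp : 0 < lp) (ht : 0 < t)
    (hφ : φ ∈ Adm t) (hφ0 : ∀ x ∈ Icc (0:ℝ) t, 0 ≤ φ x)
    (hmin : ∀ χ ∈ Adm t, Jplus γ lp q t φ ≤ Jplus γ lp q t χ) :
    ∀ x ∈ Ioo (0:ℝ) t, 0 < φ x := by
  obtain ⟨x₀, hx₀, hx₀pos⟩ := exists_pos hq hq2 hlp ht hφ hφ0 hmin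
  have hanti := deriv_antitone hq hlp ht hφ hφ0 hmin
  intro x hx
  by_contra hcon
  push_neg at hcon
  have hx0 : φ x = 0 := le_antisymm hcon (hφ0 x (Ioo_subset_Icc_self hx))
  -- x is a local min, so deriv φ x = 0
  have hloc : IsLocalMin φ x := by
    filter_upwards [Icc_mem_nhds hx.1 hx.2] with y hy
    rw [hx0]; exact hφ0 y hy
  have hdx : deriv φ x = 0 := hloc.deriv_eq_zero
  rcases lt_trichotomy x x₀ with hlt | heq | hgt
  · -- MVT on [x, x₀]
    obtain ⟨ξ, hξ, hξeq⟩ := exists_hasDerivAt_eq_slope φ (deriv φ) hlt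
      ((adm_cont ht hφ).mono (Icc_subset_Icc hx.1.le hx₀.2.le))
      (fun y hy => (adm_diffAt hφ ⟨lt_trans hx.1 hy.1, lt_trans hy.2 hx₀.2⟩).hasDerivAt)
    have hξIoo : ξ ∈ Ioo (0:ℝ) t := ⟨lt_trans hx.1 hξ.1, lt_trans hξ.2 hx₀.2⟩
    have h1 : 0 < deriv φ ξ := by
      rw [hξeq, hx0]
      apply div_pos (by linarith) (by linarith)
    have h2 : deriv φ ξ ≤ deriv φ x := hanti hx hξIoo hξ.1.le
    linarith
  · rw [← heq] at hx₀pos; linarith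
  · -- MVT on [x₀, x]
    obtain ⟨ξ, hξ, hξeq⟩ := exists_hasDerivAt_eq_slope φ (deriv φ) hgt
      ((adm_cont ht hφ).mono (Icc_subset_Icc hx₀.1.le hx.2.le))
      (fun y hy => (adm_diffAt hφ ⟨lt_trans hx₀.1 hy.1, lt_trans hy.2 hx.2⟩).hasDerivAt)
    have hξIoo : ξ ∈ Ioo (0:ℝ) t := ⟨lt_trans hx₀.1 hξ.1, lt_trans hξ.2 hx.2⟩
    have h1 : deriv φ ξ < 0 := by
      rw [hξeq, hx0]
      apply div_neg_of_neg_of_pos (by linarith) (by linarith)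
    have h2 : deriv φ x ≤ deriv φ ξ := hanti hξIoo hx hξ.2.le
    linarith


variable {t : ℝ} {φ : ℝ → ℝ}


lemma nhdsWithin_Ioo_neBot (ht : 0 < t) {x : ℝ} (hx : x ∈ Icc 0 t) :
    (nhdsWithin x (Ioo (0:ℝ) t)).NeBot := by
  apply mem_closure_iff_nhdsWithin_neBot.mp
  rw [closure_Ioo ht.ne]
  exact hx

lemma slope0_pos (ht : 0 < t) (hφ : φ ∈ Adm t)
    (hanti : AntitoneOn (deriv φ) (Ioo 0 t))
    (hpos : ∀ x ∈ Ioo (0:ℝ) t, 0 < φ x) :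
    0 < derivWithin φ (Icc 0 t) 0 := by
  have h2 : t/2 ∈ Ioo (0:ℝ) t := ⟨by linarith, by linarith⟩
  obtain ⟨ξ, hξ, hξeq⟩ := exists_hasDerivAt_eq_slope φ (deriv φ) (by linarith : (0:ℝ) < t/2)
    ((adm_cont ht hφ).mono (Icc_subset_Icc le_rfl (by linarith)))
    (fun y hy => (adm_diffAt hφ ⟨hy.1, by linarith [hy.2]⟩).hasDerivAt)
  have hξIoo : ξ ∈ Ioo (0:ℝ) t := ⟨hξ.1, by linarith [hξ.2]⟩
  have hξpos : 0 < deriv φ ξ := by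
    rw [hξeq, hφ.2.1]
    apply div_pos (by simpa using hpos _ h2) (by linarith)
  -- derivWithin at 0 is the limit of deriv φ from the right
  haveI := nhdsWithin_Ioo_neBot ht (t := t) (x := 0) ⟨le_refl 0, ht.le⟩
  have htd : Tendsto (derivWithin φ (Icc 0 t)) (nhdsWithin 0 (Ioo 0 t))
      (nhds (derivWithin φ (Icc 0 t) 0)) :=
    ((adm_derivWithin_cont ht hφ) 0 ⟨le_refl 0, ht.le⟩).mono_left
      (nhdsWithin_mono _ Ioo_subset_Icc_self)
  have hev : ∀ᶠ y in nhdsWithin 0 (Ioo (0:ℝ) t),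
      deriv φ ξ ≤ derivWithin φ (Icc 0 t) y := by
    filter_upwards [self_mem_nhdsWithin,
      eventually_nhdsWithin_of_eventually_nhds (Filter.Tendsto.eventually_lt_const hξ.1
        (tendsto_id (x := nhds (0:ℝ))))] with y hy hylt
    simp only [id_eq] at hylt
    rw [adm_derivWithin_eq hφ hy]
    exact hanti hy hξIoo (by linarith)
  have := ge_of_tendsto htd hev
  linarith

lemma slopet_neg (ht : 0 < t) (hφ : φ ∈ Adm t)
    (hanti : AntitoneOn (deriv φ) (Ioo 0 t))
    (hpos : ∀ x ∈ Ioo (0:ℝ) t, 0 < φ x) :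
    derivWithin φ (Icc 0 t) t < 0 := by
  have h2 : t/2 ∈ Ioo (0:ℝ) t := ⟨by linarith, by linarith⟩
  obtain ⟨ξ, hξ, hξeq⟩ := exists_hasDerivAt_eq_slope φ (deriv φ) (by linarith : t/2 < t)
    ((adm_cont ht hφ).mono (Icc_subset_Icc (by linarith) le_rfl))
    (fun y hy => (adm_diffAt hφ ⟨by linarith [hy.1], hy.2⟩).hasDerivAt)
  have hξIoo : ξ ∈ Ioo (0:ℝ) t := ⟨by linarith [hξ.1], hξ.2⟩
  have hξneg : deriv φ ξ < 0 := by
    rw [hξeq, hφ.2.2]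
    apply div_neg_of_neg_of_pos (by simpa using neg_neg_iff_pos.mpr (hpos _ h2)) (by linarith)
  haveI := nhdsWithin_Ioo_neBot ht (t := t) (x := t) ⟨ht.le, le_refl t⟩
  have htd : Tendsto (derivWithin φ (Icc 0 t)) (nhdsWithin t (Ioo 0 t))
      (nhds (derivWithin φ (Icc 0 t) t)) :=
    ((adm_derivWithin_cont ht hφ) t ⟨ht.le, le_refl t⟩).mono_left
      (nhdsWithin_mono _ Ioo_subset_Icc_self)
  have hev : ∀ᶠ y in nhdsWithin t (Ioo (0:ℝ) t),
      derivWithin φ (Icc 0 t) y ≤ deriv φ ξ := by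
    filter_upwards [self_mem_nhdsWithin,
      eventually_nhdsWithin_of_eventually_nhds (Filter.Tendsto.eventually_const_lt hξ.2
        (tendsto_id (x := nhds t)))] with y hy hygt
    simp only [id_eq] at hygt
    rw [adm_derivWithin_eq hφ hy]
    exact hanti hξIoo hy (by linarith)
  have := le_of_tendsto htd hev
  linarith




lemma rpow_sq_half {q a : ℝ} (hq : 0 < q) (ha : 0 < a) :
    ((a^2:ℝ)) ^ (q/2) = a ^ q := by
  rw [← Real.rpow_natCast a 2, ← Real.rpow_mul ha.le]
  norm_num
  rw [show (2:ℝ) * (q/2) = q by ring]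

/-- concavity of `x ^ (q/2)` : midpoint versions. -/
lemma mid_concave {q a b : ℝ} (hq : 0 < q) (hq2 : q < 2) (ha : 0 ≤ a) (hb : 0 ≤ b) :
    (a ^ (q/2) + b ^ (q/2)) / 2 ≤ ((a + b)/2) ^ (q/2) := by
  have h := (Real.concaveOn_rpow (p := q/2) (by positivity) (by linarith)).2
    (mem_Ici.mpr ha) (mem_Ici.mpr hb)
    (by norm_num : (0:ℝ) ≤ 1/2) (by norm_num : (0:ℝ) ≤ 1/2) (by norm_num)
  simp only [smul_eq_mul] at h
  calc (a ^ (q/2) + b ^ (q/2)) / 2 = 1/2 * a ^ (q/2) + 1/2 * b ^ (q/2) := by ring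
    _ ≤ (1/2 * a + 1/2 * b) ^ (q/2) := h
    _ = ((a + b)/2) ^ (q/2) := by ring_nf

lemma mid_concave_strict {q a b : ℝ} (hq : 0 < q) (hq2 : q < 2) (ha : 0 ≤ a)
    (hb : 0 ≤ b) (hne : a ≠ b) :
    (a ^ (q/2) + b ^ (q/2)) / 2 < ((a + b)/2) ^ (q/2) := by
  have h := (Real.strictConcaveOn_rpow (p := q/2) (by positivity) (by linarith)).2
    (mem_Ici.mpr ha) (mem_Ici.mpr hb) hne
    (by norm_num : (0:ℝ) < 1/2) (by norm_num : (0:ℝ) < 1/2) (by norm_num)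
  simp only [smul_eq_mul] at h
  calc (a ^ (q/2) + b ^ (q/2)) / 2 = 1/2 * a ^ (q/2) + 1/2 * b ^ (q/2) := by ring
    _ < (1/2 * a + 1/2 * b) ^ (q/2) := h
    _ = ((a + b)/2) ^ (q/2) := by ring_nf

/-- pointwise hidden-convexity inequality (algebraic part). -/
lemma pointwise_ineq {q γ lp da db : ℝ} (hq : 0 < q) (hq2 : q < 2) (hlp : 0 < lp)
    {a b : ℝ} (ha : 0 < a) (hb : 0 < b) :
    (1/2) * ((a * da + b * db) / (2 * Real.sqrt ((a^2 + b^2)/2))) ^ 2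
      - (γ^2/2) * (Real.sqrt ((a^2 + b^2)/2)) ^ 2
      - (lp/q) * |Real.sqrt ((a^2 + b^2)/2)| ^ q
    ≤ (((1/2) * da^2 - (γ^2/2) * a^2 - (lp/q) * |a| ^ q)
      + ((1/2) * db^2 - (γ^2/2) * b^2 - (lp/q) * |b| ^ q)) / 2
    ∧ (a ≠ b →
    (1/2) * ((a * da + b * db) / (2 * Real.sqrt ((a^2 + b^2)/2))) ^ 2
      - (γ^2/2) * (Real.sqrt ((a^2 + b^2)/2)) ^ 2
      - (lp/q) * |Real.sqrt ((a^2 + b^2)/2)| ^ q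
    < (((1/2) * da^2 - (γ^2/2) * a^2 - (lp/q) * |a| ^ q)
      + ((1/2) * db^2 - (γ^2/2) * b^2 - (lp/q) * |b| ^ q)) / 2) := by
  have hu : 0 < (a^2 + b^2)/2 := by positivity
  have hv : 0 < Real.sqrt ((a^2 + b^2)/2) := Real.sqrt_pos.mpr hu
  have hv2 : (Real.sqrt ((a^2 + b^2)/2)) ^ 2 = (a^2 + b^2)/2 :=
    Real.sq_sqrt hu.le
  have hlq : 0 < lp / q := div_pos hlp hq
  -- gradient term
  have p1 : ((a * da + b * db) / (2 * Real.sqrt ((a^2 + b^2)/2))) ^ 2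
      ≤ (da^2 + db^2)/2 := by
    have hcs : (a * da + b * db)^2 ≤ (a^2 + b^2) * (da^2 + db^2) := by
      nlinarith [sq_nonneg (a * db - b * da)]
    rw [div_pow, mul_pow, hv2, div_le_iff₀ (by positivity)]
    calc (a * da + b * db)^2 ≤ (a^2 + b^2) * (da^2 + db^2) := hcs
      _ = (da^2 + db^2)/2 * (2^2 * ((a^2 + b^2)/2)) := by ring
  -- rpow rewriting
  have habs : |Real.sqrt ((a^2 + b^2)/2)| ^ q = ((a^2 + b^2)/2) ^ (q/2) := by
    rw [abs_of_pos hv, Real.sqrt_eq_rpow, ← Real.rpow_mul hu.le]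
    congr 1
    ring
  have haq : |a| ^ q = (a^2:ℝ) ^ (q/2) := by
    rw [abs_of_pos ha, rpow_sq_half hq ha]
  have hbq : |b| ^ q = (b^2:ℝ) ^ (q/2) := by
    rw [abs_of_pos hb, rpow_sq_half hq hb]
  constructor
  · have p3 := mid_concave (a := a^2) (b := b^2) hq hq2 (by positivity) (by positivity)
    rw [habs, haq, hbq, hv2]
    nlinarith
  · intro hne
    have hne2 : a^2 ≠ b^2 := by
      intro h
      apply hne
      have h1 : (a - b) * (a + b) = 0 := by nlinarith
      rcases mul_eq_zero.mp h1 with h2 | h2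
      · linarith
      · linarith
    have p3 := mid_concave_strict (a := a^2) (b := b^2) hq hq2
      (by positivity) (by positivity) hne2
    rw [habs, haq, hbq, hv2]
    nlinarith



variable {t : ℝ} {φ ψ : ℝ → ℝ}


lemma sqrt_pair_div {A B y : ℝ} (hy : y ≠ 0) :
    Real.sqrt (((A/y)^2 + (B/y)^2)/2) = Real.sqrt ((A^2 + B^2)/2) / |y| := by
  have h1 : ((A/y)^2 + (B/y)^2)/2 = ((A^2 + B^2)/2) / y^2 := by
    field_simp
  rw [h1, Real.sqrt_div (by positivity), Real.sqrt_sq_eq_abs]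

/-- interior derivative of the sqrt-mean competitor. -/
lemma v_hasDerivAt_interior (hφ : φ ∈ Adm t) (hψ : ψ ∈ Adm t) {x : ℝ}
    (hx : x ∈ Ioo 0 t) (hpos : 0 < φ x) :
    HasDerivAt (fun y => Real.sqrt ((φ y^2 + ψ y^2)/2))
      ((φ x * deriv φ x + ψ x * deriv ψ x)
        / (2 * Real.sqrt ((φ x^2 + ψ x^2)/2))) x := by
  have hu : 0 < (φ x^2 + ψ x^2)/2 := by positivity
  have hv : 0 < Real.sqrt ((φ x^2 + ψ x^2)/2) := Real.sqrt_pos.mpr hu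
  have hu' : HasDerivAt (fun y => (φ y^2 + ψ y^2)/2)
      ((2 * φ x ^ 1 * deriv φ x + 2 * ψ x ^ 1 * deriv ψ x)/2) x := by
    exact (((adm_diffAt hφ hx).hasDerivAt.pow 2).add
      ((adm_diffAt hψ hx).hasDerivAt.pow 2)).div_const 2
  have hcomp := (Real.hasDerivAt_sqrt hu.ne').comp x hu'
  refine hcomp.congr_deriv ?_
  have hsq : Real.sqrt ((φ x^2 + ψ x^2)/2) ^ 2 = (φ x^2 + ψ x^2)/2 :=
    Real.sq_sqrt hu.le
  field_simp

/-- derivative from the right at `0`. -/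
lemma v_hasDerivWithinAt_zero (ht : 0 < t) (hφ : φ ∈ Adm t) (hψ : ψ ∈ Adm t) :
    HasDerivWithinAt (fun y => Real.sqrt ((φ y^2 + ψ y^2)/2))
      (Real.sqrt (((derivWithin φ (Icc 0 t) 0)^2 + (derivWithin ψ (Icc 0 t) 0)^2)/2))
      (Icc 0 t) 0 := by
  have h0I : (0:ℝ) ∈ Icc 0 t := ⟨le_refl 0, ht.le⟩
  have hφd : HasDerivWithinAt φ (derivWithin φ (Icc 0 t) 0) (Icc 0 t) 0 :=
    (hφ.1.differentiableOn one_ne_zero 0 h0I).hasDerivWithinAt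
  have hψd : HasDerivWithinAt ψ (derivWithin ψ (Icc 0 t) 0) (Icc 0 t) 0 :=
    (hψ.1.differentiableOn one_ne_zero 0 h0I).hasDerivWithinAt
  rw [hasDerivWithinAt_iff_tendsto_slope] at hφd hψd ⊢
  have hF : Tendsto (fun y => Real.sqrt (((slope φ 0 y)^2 + (slope ψ 0 y)^2)/2))
      (nhdsWithin 0 (Icc 0 t \ {0}))
      (nhds (Real.sqrt (((derivWithin φ (Icc 0 t) 0)^2
        + (derivWithin ψ (Icc 0 t) 0)^2)/2))) :=
    (Real.continuous_sqrt.continuousAt.tendsto).comp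
      (((hφd.pow 2).add (hψd.pow 2)).div_const 2)
  apply hF.congr'
  filter_upwards [self_mem_nhdsWithin] with y hy
  have hy0 : 0 < y := lt_of_le_of_ne hy.1.1 (by simpa [eq_comm] using hy.2)
  have e1 : slope φ 0 y = φ y / y := by
    rw [slope_def_field, hφ.2.1, sub_zero, sub_zero]
  have e2 : slope ψ 0 y = ψ y / y := by
    rw [slope_def_field, hψ.2.1, sub_zero, sub_zero]
  have e3 : slope (fun y => Real.sqrt ((φ y^2 + ψ y^2)/2)) 0 y
      = Real.sqrt ((φ y^2 + ψ y^2)/2) / y := by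
    rw [slope_def_field, hφ.2.1, hψ.2.1]
    norm_num
  rw [e1, e2, e3, sqrt_pair_div hy0.ne', abs_of_pos hy0]

/-- derivative from the left at `t`. -/
lemma v_hasDerivWithinAt_t (ht : 0 < t) (hφ : φ ∈ Adm t) (hψ : ψ ∈ Adm t) :
    HasDerivWithinAt (fun y => Real.sqrt ((φ y^2 + ψ y^2)/2))
      (-Real.sqrt (((derivWithin φ (Icc 0 t) t)^2 + (derivWithin ψ (Icc 0 t) t)^2)/2))
      (Icc 0 t) t := by
  have htI : t ∈ Icc (0:ℝ) t := ⟨ht.le, le_refl t⟩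
  have hφd : HasDerivWithinAt φ (derivWithin φ (Icc 0 t) t) (Icc 0 t) t :=
    (hφ.1.differentiableOn one_ne_zero t htI).hasDerivWithinAt
  have hψd : HasDerivWithinAt ψ (derivWithin ψ (Icc 0 t) t) (Icc 0 t) t :=
    (hψ.1.differentiableOn one_ne_zero t htI).hasDerivWithinAt
  rw [hasDerivWithinAt_iff_tendsto_slope] at hφd hψd ⊢
  have hF : Tendsto (fun y => -Real.sqrt (((slope φ t y)^2 + (slope ψ t y)^2)/2))
      (nhdsWithin t (Icc 0 t \ {t}))
      (nhds (-Real.sqrt (((derivWithin φ (Icc 0 t) t)^2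
        + (derivWithin ψ (Icc 0 t) t)^2)/2))) :=
    ((Real.continuous_sqrt.continuousAt.tendsto).comp
      (((hφd.pow 2).add (hψd.pow 2)).div_const 2)).neg
  apply hF.congr'
  filter_upwards [self_mem_nhdsWithin] with y hy
  have hyt : y < t := lt_of_le_of_ne hy.1.2 (by simpa using hy.2)
  have hy0 : y - t ≠ 0 := by linarith
  have e1 : slope φ t y = φ y / (y - t) := by
    rw [slope_def_field, hφ.2.2, sub_zero]
  have e2 : slope ψ t y = ψ y / (y - t) := by
    rw [slope_def_field, hψ.2.2, sub_zero]
  have e3 : slope (fun y => Real.sqrt ((φ y^2 + ψ y^2)/2)) t y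
      = Real.sqrt ((φ y^2 + ψ y^2)/2) / (y - t) := by
    rw [slope_def_field, hφ.2.2, hψ.2.2]
    norm_num
  rw [e1, e2, e3, sqrt_pair_div hy0, abs_of_neg (by linarith : y - t < 0)]
  rw [div_neg, neg_neg]


variable {t : ℝ} {φ ψ : ℝ → ℝ}

lemma v_mem_Adm (ht : 0 < t) (hφ : φ ∈ Adm t) (hψ : ψ ∈ Adm t)
    (hφpos : ∀ x ∈ Ioo (0:ℝ) t, 0 < φ x)
    (h0φ : 0 < derivWithin φ (Icc 0 t) 0)
    (htφ : derivWithin φ (Icc 0 t) t < 0) :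
    (fun y => Real.sqrt ((φ y^2 + ψ y^2)/2)) ∈ Adm t := by
  set Dφ : ℝ → ℝ := derivWithin φ (Icc 0 t) with hDφdef
  set Dψ : ℝ → ℝ := derivWithin ψ (Icc 0 t) with hDψdef
  set v : ℝ → ℝ := fun y => Real.sqrt ((φ y^2 + ψ y^2)/2) with hvdef
  set c0 : ℝ := Real.sqrt ((Dφ 0^2 + Dψ 0^2)/2) with hc0def
  set ct : ℝ := -Real.sqrt ((Dφ t^2 + Dψ t^2)/2) with hctdef
  set W : ℝ → ℝ := fun x => if x = 0 then c0 else if x = t then ct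
    else (φ x * Dφ x + ψ x * Dψ x)/(2 * v x) with hWdef
  have h0I : (0:ℝ) ∈ Icc 0 t := ⟨le_refl 0, ht.le⟩
  have htI : t ∈ Icc (0:ℝ) t := ⟨ht.le, le_refl t⟩
  have hc0pos : 0 < c0 := by
    rw [hc0def]; apply Real.sqrt_pos.mpr
    nlinarith [sq_nonneg (Dψ 0), mul_pos h0φ h0φ]
  have hctneg : ct < 0 := by
    rw [hctdef, neg_neg_iff_pos]; apply Real.sqrt_pos.mpr
    nlinarith [sq_nonneg (Dψ t), mul_pos_of_neg_of_neg htφ htφ]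
  have hvpos : ∀ x ∈ Ioo (0:ℝ) t, 0 < v x := by
    intro x hx
    rw [hvdef]
    apply Real.sqrt_pos.mpr
    have := hφpos x hx
    positivity
  have hφc := adm_cont ht hφ
  have hψc := adm_cont ht hψ
  have hDφc : ContinuousOn Dφ (Icc 0 t) := adm_derivWithin_cont ht hφ
  have hDψc : ContinuousOn Dψ (Icc 0 t) := adm_derivWithin_cont ht hψ
  have hvc : ContinuousOn v (Icc 0 t) := by
    rw [hvdef]
    exact Real.continuous_sqrt.comp_continuousOn
      (((hφc.pow 2).add (hψc.pow 2)).div_const 2)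
  -- the derivative everywhere on Icc
  have hW : ∀ x ∈ Icc (0:ℝ) t, HasDerivWithinAt v (W x) (Icc 0 t) x := by
    intro x hx
    rcases eq_or_ne x 0 with rfl | hx0
    · have : W 0 = c0 := by rw [hWdef]; simp
      rw [this]
      exact v_hasDerivWithinAt_zero ht hφ hψ
    rcases eq_or_ne x t with rfl | hxt
    · have : W x = ct := by rw [hWdef]; simp [ht.ne']
      rw [this]
      exact v_hasDerivWithinAt_t ht hφ hψ
    · have hxIoo : x ∈ Ioo (0:ℝ) t :=
        ⟨lt_of_le_of_ne hx.1 (Ne.symm hx0), lt_of_le_of_ne hx.2 hxt⟩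
      have : W x = (φ x * Dφ x + ψ x * Dψ x)/(2 * v x) := by
        rw [hWdef]; simp [hx0, hxt]
      rw [this, hDφdef, hDψdef, adm_derivWithin_eq hφ hxIoo, adm_derivWithin_eq hψ hxIoo]
      exact (v_hasDerivAt_interior hφ hψ hxIoo (hφpos x hxIoo)).hasDerivWithinAt
  -- continuity of W on Icc
  have hWcont : ContinuousOn W (Icc 0 t) := by
    intro x hx
    rcases eq_or_ne x 0 with rfl | hx0
    · -- at 0
      rw [← continuousWithinAt_diff_self]
      have hW0 : W 0 = c0 := by rw [hWdef]; simp
      rw [ContinuousWithinAt, hW0]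
      -- slope limits
      have hφd : HasDerivWithinAt φ (Dφ 0) (Icc 0 t) 0 :=
        (hφ.1.differentiableOn one_ne_zero 0 h0I).hasDerivWithinAt
      have hψd : HasDerivWithinAt ψ (Dψ 0) (Icc 0 t) 0 :=
        (hψ.1.differentiableOn one_ne_zero 0 h0I).hasDerivWithinAt
      rw [hasDerivWithinAt_iff_tendsto_slope] at hφd hψd
      have hDφ0 : Tendsto Dφ (nhdsWithin 0 (Icc 0 t \ {0})) (nhds (Dφ 0)) :=
        (hDφc 0 h0I).mono_left (nhdsWithin_mono _ diff_subset)
      have hDψ0 : Tendsto Dψ (nhdsWithin 0 (Icc 0 t \ {0})) (nhds (Dψ 0)) :=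
        (hDψc 0 h0I).mono_left (nhdsWithin_mono _ diff_subset)
      have hnum : Tendsto (fun y => slope φ 0 y * Dφ y + slope ψ 0 y * Dψ y)
          (nhdsWithin 0 (Icc 0 t \ {0})) (nhds (Dφ 0 * Dφ 0 + Dψ 0 * Dψ 0)) :=
        (hφd.mul hDφ0).add (hψd.mul hDψ0)
      have hden : Tendsto (fun y => 2 * Real.sqrt (((slope φ 0 y)^2 + (slope ψ 0 y)^2)/2))
          (nhdsWithin 0 (Icc 0 t \ {0})) (nhds (2 * c0)) := by
        rw [hc0def]
        exact (((Real.continuous_sqrt.continuousAt.tendsto).comp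
          (((hφd.pow 2).add (hψd.pow 2)).div_const 2))).const_mul 2
      have hq := hnum.div hden (ne_of_gt (by linarith))
      have hval : (Dφ 0 * Dφ 0 + Dψ 0 * Dψ 0) / (2 * c0) = c0 := by
        have hc2 : c0^2 = (Dφ 0^2 + Dψ 0^2)/2 := by
          rw [hc0def]; exact Real.sq_sqrt (by positivity)
        have h2c : Dφ 0 * Dφ 0 + Dψ 0 * Dψ 0 = 2 * c0^2 := by rw [hc2]; ring
        have hc0ne : c0 ≠ 0 := ne_of_gt hc0pos
        rw [h2c]
        field_simp
      rw [hval] at hq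
      apply hq.congr'
      filter_upwards [self_mem_nhdsWithin,
        eventually_nhdsWithin_of_eventually_nhds
          (Filter.Tendsto.eventually_lt_const ht (tendsto_id (x := nhds (0:ℝ))))] with y hy hyt
      simp only [id_eq] at hyt
      have hy0 : 0 < y := lt_of_le_of_ne hy.1.1 (by simpa [eq_comm] using hy.2)
      have hyIoo : y ∈ Ioo (0:ℝ) t := ⟨hy0, hyt⟩
      have hWy : W y = (φ y * Dφ y + ψ y * Dψ y)/(2 * v y) := by
        rw [hWdef]; simp [hy0.ne', hyt.ne]
      have e1 : slope φ 0 y = φ y / y := by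
        rw [slope_def_field, hφ.2.1, sub_zero, sub_zero]
      have e2 : slope ψ 0 y = ψ y / y := by
        rw [slope_def_field, hψ.2.1, sub_zero, sub_zero]
      have e3 : v y = y * Real.sqrt (((φ y / y)^2 + (ψ y / y)^2)/2) := by
        rw [sqrt_pair_div hy0.ne', abs_of_pos hy0, hvdef]
        field_simp
        try ring
      simp only [Pi.div_apply]
      rw [e1, e2, hWy, e3]
      rw [show φ y * Dφ y + ψ y * Dψ y
          = y * ((φ y / y) * Dφ y + (ψ y / y) * Dψ y) by field_simp]
      rw [show 2 * (y * Real.sqrt (((φ y / y)^2 + (ψ y / y)^2)/2))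
          = y * (2 * Real.sqrt (((φ y / y)^2 + (ψ y / y)^2)/2)) by ring]
      rw [mul_div_mul_left _ _ hy0.ne']
    rcases eq_or_ne x t with heq | hxt
    · -- at t
      rw [heq]
      rw [← continuousWithinAt_diff_self]
      have hWt : W t = ct := by rw [hWdef]; simp [ht.ne']
      rw [ContinuousWithinAt, hWt]
      have hφd : HasDerivWithinAt φ (Dφ t) (Icc 0 t) t :=
        (hφ.1.differentiableOn one_ne_zero t htI).hasDerivWithinAt
      have hψd : HasDerivWithinAt ψ (Dψ t) (Icc 0 t) t :=
        (hψ.1.differentiableOn one_ne_zero t htI).hasDerivWithinAt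
      rw [hasDerivWithinAt_iff_tendsto_slope] at hφd hψd
      have hDφt : Tendsto Dφ (nhdsWithin t (Icc 0 t \ {t})) (nhds (Dφ t)) :=
        (hDφc t htI).mono_left (nhdsWithin_mono _ diff_subset)
      have hDψt : Tendsto Dψ (nhdsWithin t (Icc 0 t \ {t})) (nhds (Dψ t)) :=
        (hDψc t htI).mono_left (nhdsWithin_mono _ diff_subset)
      have hnum : Tendsto (fun y => slope φ t y * Dφ y + slope ψ t y * Dψ y)
          (nhdsWithin t (Icc 0 t \ {t})) (nhds (Dφ t * Dφ t + Dψ t * Dψ t)) :=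
        (hφd.mul hDφt).add (hψd.mul hDψt)
      have hden : Tendsto (fun y => 2 * Real.sqrt (((slope φ t y)^2 + (slope ψ t y)^2)/2))
          (nhdsWithin t (Icc 0 t \ {t})) (nhds (2 * (-ct))) := by
        rw [hctdef, neg_neg]
        exact (((Real.continuous_sqrt.continuousAt.tendsto).comp
          (((hφd.pow 2).add (hψd.pow 2)).div_const 2))).const_mul 2
      have hq := (hnum.div hden (ne_of_gt (by linarith))).neg
      have hval : -((Dφ t * Dφ t + Dψ t * Dψ t) / (2 * (-ct))) = ct := by
        have hc2 : ct^2 = (Dφ t^2 + Dψ t^2)/2 := by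
          rw [hctdef, neg_sq]
          exact Real.sq_sqrt (by positivity)
        have h2c : Dφ t * Dφ t + Dψ t * Dψ t = 2 * ct^2 := by rw [hc2]; ring
        have hct0 : ct ≠ 0 := by linarith
        rw [h2c]
        field_simp
      rw [hval] at hq
      apply hq.congr'
      filter_upwards [self_mem_nhdsWithin,
        eventually_nhdsWithin_of_eventually_nhds
          (Filter.Tendsto.eventually_const_lt ht (tendsto_id (x := nhds t)))] with y hy hy0'
      simp only [id_eq] at hy0'
      have hyt : y < t := lt_of_le_of_ne hy.1.2 (by simpa using hy.2)
      have hytne : y - t ≠ 0 := by linarith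
      have hWy : W y = (φ y * Dφ y + ψ y * Dψ y)/(2 * v y) := by
        rw [hWdef]; simp [hy0'.ne', hyt.ne]
      have e1 : slope φ t y = φ y / (y - t) := by
        rw [slope_def_field, hφ.2.2, sub_zero]
      have e2 : slope ψ t y = ψ y / (y - t) := by
        rw [slope_def_field, hψ.2.2, sub_zero]
      have e3 : v y = (t - y) * Real.sqrt (((φ y / (y-t))^2 + (ψ y / (y-t))^2)/2) := by
        have htyne : t - y ≠ 0 := by linarith
        rw [sqrt_pair_div hytne, abs_of_neg (by linarith : y - t < 0),
          show -(y - t) = t - y by ring, mul_comm, div_mul_cancel₀ _ htyne, hvdef]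
      simp only [Pi.neg_apply, Pi.div_apply]
      rw [e1, e2, hWy, e3]
      rw [show φ y * Dφ y + ψ y * Dψ y
          = (y - t) * ((φ y / (y-t)) * Dφ y + (ψ y / (y-t)) * Dψ y) by field_simp]
      rw [show 2 * ((t - y) * Real.sqrt (((φ y / (y-t))^2 + (ψ y / (y-t))^2)/2))
          = (y - t) * -(2 * Real.sqrt (((φ y / (y-t))^2 + (ψ y / (y-t))^2)/2)) by ring]
      rw [mul_div_mul_left _ _ hytne, div_neg]
    · -- interior
      have hxIoo : x ∈ Ioo (0:ℝ) t :=
        ⟨lt_of_le_of_ne hx.1 (Ne.symm hx0), lt_of_le_of_ne hx.2 hxt⟩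
      have hG : ContinuousWithinAt
          (fun y => (φ y * Dφ y + ψ y * Dψ y)/(2 * v y)) (Icc 0 t) x := by
        apply ContinuousWithinAt.div
        · exact ((hφc x hx).mul (hDφc x hx)).add ((hψc x hx).mul (hDψc x hx))
        · exact (continuousOn_const.mul hvc) x hx
        · exact ne_of_gt (by linarith [hvpos x hxIoo])
      apply hG.congr_of_eventuallyEq
      · filter_upwards [mem_nhdsWithin_of_mem_nhds (Ioo_mem_nhds hxIoo.1 hxIoo.2)]
          with y hy
        rw [hWdef]; simp [ne_of_gt hy.1, ne_of_lt hy.2]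
      · rw [hWdef]; simp [hx0, hxt]
  -- assemble
  have hvdiff : DifferentiableOn ℝ v (Icc 0 t) :=
    fun x hx => (hW x hx).differentiableWithinAt
  have hder : ∀ x ∈ Icc (0:ℝ) t, derivWithin v (Icc 0 t) x = W x :=
    fun x hx => (hW x hx).derivWithin (uniqueDiffOn_Icc ht x hx)
  refine ⟨?_, ?_, ?_⟩
  · rw [show (1 : WithTop ℕ∞) = 0 + 1 by norm_num,
      contDiffOn_succ_iff_derivWithin (uniqueDiffOn_Icc ht)]
    refine ⟨hvdiff, by simp, ?_⟩
    rw [contDiffOn_zero]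
    exact hWcont.congr hder
  · rw [hvdef]; simp [hφ.2.1, hψ.2.1]
  · rw [hvdef]; simp [hφ.2.2, hψ.2.2]


variable {t : ℝ} {φ ψ : ℝ → ℝ}


lemma integrand_contOn_Ioo {γ lp q : ℝ} (hq : 0 ≤ q) (ht : 0 < t) (hφ : φ ∈ Adm t) :
    ContinuousOn (fun x =>
      (1 / 2) * (deriv φ x) ^ 2 - (γ ^ 2 / 2) * (φ x) ^ 2 - (lp / q) * |φ x| ^ q)
      (Ioo 0 t) := by
  apply ContinuousOn.sub
  apply ContinuousOn.sub
  · exact continuousOn_const.mul ((adm_deriv_contOn_Ioo ht hφ).pow 2)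
  · exact continuousOn_const.mul
      (((adm_cont ht hφ).mono Ioo_subset_Icc_self).pow 2)
  · exact continuousOn_const.mul
      ((contOn_rpow_abs hq ht hφ).mono Ioo_subset_Icc_self)

/-- A: uniqueness of the nonnegative minimizer. -/
lemma minimizers_eq {γ lp q : ℝ} (hq : 0 < q) (hq2 : q < 2) (hlp : 0 < lp)
    (ht : 0 < t) (hφ : φ ∈ Adm t) (hψ : ψ ∈ Adm t)
    (hφ0 : ∀ x ∈ Icc (0:ℝ) t, 0 ≤ φ x) (hψ0 : ∀ x ∈ Icc (0:ℝ) t, 0 ≤ ψ x)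
    (hminφ : ∀ χ ∈ Adm t, Jplus γ lp q t φ ≤ Jplus γ lp q t χ)
    (hminψ : ∀ χ ∈ Adm t, Jplus γ lp q t ψ ≤ Jplus γ lp q t χ) :
    ∀ x ∈ Icc (0:ℝ) t, φ x = ψ x := by
  by_contra hcon
  push_neg at hcon
  obtain ⟨x₀, hx₀I, hx₀ne⟩ := hcon
  have hφpos := pos_on_Ioo hq hq2 hlp ht hφ hφ0 hminφ
  have hψpos := pos_on_Ioo hq hq2 hlp ht hψ hψ0 hminψ
  have hφanti := deriv_antitone hq hlp ht hφ hφ0 hminφ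
  have hψanti := deriv_antitone hq hlp ht hψ hψ0 hminψ
  -- x₀ is interior
  have hx₀ : x₀ ∈ Ioo (0:ℝ) t := by
    rcases eq_or_lt_of_le hx₀I.1 with h | h
    · exfalso; apply hx₀ne; rw [← h, hφ.2.1, hψ.2.1]
    rcases eq_or_lt_of_le hx₀I.2 with h' | h'
    · exfalso; apply hx₀ne; rw [h', hφ.2.2, hψ.2.2]
    · exact ⟨h, h'⟩
  -- the competitor
  set v : ℝ → ℝ := fun y => Real.sqrt ((φ y^2 + ψ y^2)/2) with hvdef
  have hvAdm : v ∈ Adm t :=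
    v_mem_Adm ht hφ hψ hφpos (slope0_pos ht hφ hφanti hφpos)
      (slopet_neg ht hφ hφanti hφpos)
  have hJψφ : Jplus γ lp q t ψ = Jplus γ lp q t φ :=
    le_antisymm (hminψ φ hφ) (hminφ ψ hψ)
  -- pointwise comparison
  have hderiv_v : ∀ x ∈ Ioo (0:ℝ) t, deriv v x
      = (φ x * deriv φ x + ψ x * deriv ψ x) / (2 * Real.sqrt ((φ x^2 + ψ x^2)/2)) :=
    fun x hx => (v_hasDerivAt_interior hφ hψ hx (hφpos x hx)).deriv
  have hpt : ∀ x ∈ Ioo (0:ℝ) t,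
      ((1 / 2) * (deriv v x) ^ 2 - (γ ^ 2 / 2) * (v x) ^ 2 - (lp / q) * |v x| ^ q)
      ≤ (((1 / 2) * (deriv φ x) ^ 2 - (γ ^ 2 / 2) * (φ x) ^ 2 - (lp / q) * |φ x| ^ q)
        + ((1 / 2) * (deriv ψ x) ^ 2 - (γ ^ 2 / 2) * (ψ x) ^ 2
          - (lp / q) * |ψ x| ^ q)) / 2 := by
    intro x hx
    rw [hderiv_v x hx, hvdef]
    exact (pointwise_ineq hq hq2 hlp (hφpos x hx) (hψpos x hx)).1
  have hptstrict : ∀ x ∈ Ioo (0:ℝ) t, φ x ≠ ψ x →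
      ((1 / 2) * (deriv v x) ^ 2 - (γ ^ 2 / 2) * (v x) ^ 2 - (lp / q) * |v x| ^ q)
      < (((1 / 2) * (deriv φ x) ^ 2 - (γ ^ 2 / 2) * (φ x) ^ 2 - (lp / q) * |φ x| ^ q)
        + ((1 / 2) * (deriv ψ x) ^ 2 - (γ ^ 2 / 2) * (ψ x) ^ 2
          - (lp / q) * |ψ x| ^ q)) / 2 := by
    intro x hx hne
    rw [hderiv_v x hx, hvdef]
    exact (pointwise_ineq hq hq2 hlp (hφpos x hx) (hψpos x hx)).2 hne
  -- a subinterval where φ ≠ ψ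
  have hca : ContinuousAt (fun y => φ y - ψ y) x₀ :=
    (((adm_cont ht hφ).sub (adm_cont ht hψ)).continuousAt
      (Icc_mem_nhds (by linarith [hx₀.1]) (by linarith [hx₀.2])))
  have hev : ∀ᶠ y in nhds x₀, φ y - ψ y ≠ 0 ∧ y ∈ Ioo (0:ℝ) t := by
    filter_upwards [hca.eventually_ne (sub_ne_zero.mpr hx₀ne),
      Ioo_mem_nhds hx₀.1 hx₀.2] with y h1 h2
    exact ⟨h1, h2⟩
  obtain ⟨δ, hδ, hball⟩ := Metric.eventually_nhds_iff.mp hev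
  set α := x₀ - δ/2 with hαdef
  set β := x₀ + δ/2 with hβdef
  have hαβ : α < β := by rw [hαdef, hβdef]; linarith
  have hIccsub : Icc α β ⊆ {y | φ y - ψ y ≠ 0 ∧ y ∈ Ioo (0:ℝ) t} := by
    intro y hy
    apply hball
    rw [Real.dist_eq, abs_lt]
    simp only [mem_Icc, hαdef, hβdef] at hy
    constructor <;> linarith [hy.1, hy.2]
  have hIccIoo : Icc α β ⊆ Ioo (0:ℝ) t := fun y hy => (hIccsub hy).2
  -- integrate the difference
  have hφI := intOn_integrand (γ := γ) (lp := lp) hq.le ht hφ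
  have hψI := intOn_integrand (γ := γ) (lp := lp) hq.le ht hψ
  have hvI := intOn_integrand (γ := γ) (lp := lp) hq.le ht hvAdm
  have hS1 : IntegrableOn (fun x =>
      ((1 / 2) * (deriv φ x) ^ 2 - (γ ^ 2 / 2) * (φ x) ^ 2 - (lp / q) * |φ x| ^ q)
      + ((1 / 2) * (deriv ψ x) ^ 2 - (γ ^ 2 / 2) * (ψ x) ^ 2 - (lp / q) * |ψ x| ^ q))
      (Ioo 0 t) := hφI.add hψI
  have hS2 : IntegrableOn (fun x =>
      (((1 / 2) * (deriv φ x) ^ 2 - (γ ^ 2 / 2) * (φ x) ^ 2 - (lp / q) * |φ x| ^ q)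
      + ((1 / 2) * (deriv ψ x) ^ 2 - (γ ^ 2 / 2) * (ψ x) ^ 2 - (lp / q) * |ψ x| ^ q))/2)
      (Ioo 0 t) := hS1.div_const 2
  have hDint : IntegrableOn (fun x =>
      (((1 / 2) * (deriv φ x) ^ 2 - (γ ^ 2 / 2) * (φ x) ^ 2 - (lp / q) * |φ x| ^ q)
      + ((1 / 2) * (deriv ψ x) ^ 2 - (γ ^ 2 / 2) * (ψ x) ^ 2 - (lp / q) * |ψ x| ^ q))/2
      - ((1 / 2) * (deriv v x) ^ 2 - (γ ^ 2 / 2) * (v x) ^ 2 - (lp / q) * |v x| ^ q))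
      (Ioo 0 t) := hS2.sub hvI
  have hDpos : 0 < ∫ x in Ioo (0:ℝ) t,
      ((((1 / 2) * (deriv φ x) ^ 2 - (γ ^ 2 / 2) * (φ x) ^ 2 - (lp / q) * |φ x| ^ q)
      + ((1 / 2) * (deriv ψ x) ^ 2 - (γ ^ 2 / 2) * (ψ x) ^ 2 - (lp / q) * |ψ x| ^ q))/2
      - ((1 / 2) * (deriv v x) ^ 2 - (γ ^ 2 / 2) * (v x) ^ 2 - (lp / q) * |v x| ^ q)) := by
    apply pos_integral ht hDint ?_ hαβ hIccIoo ?_ ?_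
    · intro x hx
      linarith [hpt x hx]
    · apply ContinuousOn.sub
      · exact (((integrand_contOn_Ioo hq.le ht hφ).add
          (integrand_contOn_Ioo hq.le ht hψ)).div_const 2).mono hIccIoo
      · exact (integrand_contOn_Ioo hq.le ht hvAdm).mono hIccIoo
    · intro x hx
      have h1 := hIccsub hx
      linarith [hptstrict x h1.2 (sub_ne_zero.mp h1.1)]
  have hsplit : (∫ x in Ioo (0:ℝ) t,
      ((((1 / 2) * (deriv φ x) ^ 2 - (γ ^ 2 / 2) * (φ x) ^ 2 - (lp / q) * |φ x| ^ q)
      + ((1 / 2) * (deriv ψ x) ^ 2 - (γ ^ 2 / 2) * (ψ x) ^ 2 - (lp / q) * |ψ x| ^ q))/2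
      - ((1 / 2) * (deriv v x) ^ 2 - (γ ^ 2 / 2) * (v x) ^ 2 - (lp / q) * |v x| ^ q)))
      = (Jplus γ lp q t φ + Jplus γ lp q t ψ)/2 - Jplus γ lp q t v := by
    rw [integral_sub hS2 hvI, MeasureTheory.integral_div, integral_add hφI hψI]
    rfl
  rw [hsplit, hJψφ] at hDpos
  have := hminφ v hvAdm
  linarith

end JP

/-- under the assumptions guaranteeing existence (`0 < t ≤ T = 2π/k`,
`k²/4 > γ_q²`), the non-negative minimizer of `J⁺_t` over `H¹₀(0,t)` is unique and
strictly positive on `(0,t)`. -/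
theorem Jplus_nonneg_minimizer_unique (k : ℕ) (hk : 1 ≤ k) (q lp t : ℝ)
    (hq1 : 1 ≤ q) (hq2 : q < 2) (hlp : 0 < lp)
    (hkγ : (2 / (2 - q)) ^ 2 < (k : ℝ) ^ 2 / 4)
    (ht : 0 < t) (htT : t ≤ 2 * Real.pi / k) :
    ∀ φ ∈ Adm t, ∀ ψ ∈ Adm t,
      (∀ x ∈ Icc (0 : ℝ) t, 0 ≤ φ x) → (∀ x ∈ Icc (0 : ℝ) t, 0 ≤ ψ x) →
      (∀ χ ∈ Adm t, Jplus (2 / (2 - q)) lp q t φ ≤ Jplus (2 / (2 - q)) lp q t χ) →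
      (∀ χ ∈ Adm t, Jplus (2 / (2 - q)) lp q t ψ ≤ Jplus (2 / (2 - q)) lp q t χ) →
      (∀ x ∈ Icc (0 : ℝ) t, φ x = ψ x) ∧ (∀ x ∈ Ioo (0 : ℝ) t, 0 < φ x) := by
  intro φ hφ ψ hψ hφ0 hψ0 hminφ hminψ
  have hq : 0 < q := lt_of_lt_of_le one_pos hq1
  exact ⟨JP.minimizers_eq hq hq2 hlp ht hφ hψ hφ0 hψ0 hminφ hminψ,
    JP.pos_on_Ioo hq hq2 hlp ht hφ hφ0 hminφ⟩
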